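/- Let Ω ⊂ ℝ^d be bounded and measurable, let Ω_i ⊂ Ω be measurable with |Ω \ Ω_i| > 0 (Lebesgue measure), and let γ : Ω × Ω → [0,∞] be measurable with γ(x,y) ≥ δ |x - y|^{-(d + s(x) + s(y))} for a.e. x, y ∈ Ω, where δ > 0 and s : ℝ^d → [s̲, s̄] ⊂ (0,1) is measurable. Then there exists a constant C > 0, depending only on Ω, Ω_i, δ, d, s̄, such that for every v ∈ L²(Ω) with v = 0 a.e. on Ω \ Ω_i one has the nonlocal Poincaré inequality ‖v‖²_{L²(Ω)} ≤ C ∫_Ω ∫_Ω (v(x) - v(y))² γ(x,y) dy dx. -/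

import Mathlib

open MeasureTheory ENNReal

/-- Nonlocal Poincaré inequality for the variable-order fractional kernel:
there is a constant `C`, depending only on `Ω`, `Ωi`, `δ`, `d`, `shi`, such that
`‖v‖²_{L²(Ω)} ≤ C ∫_Ω ∫_Ω (v(x)-v(y))² γ(x,y) dy dx` for all `v ∈ L²(Ω)` vanishing
a.e. outside `Ωi`. -/
theorem nonlocal_poincare_inequality
    (d : ℕ) (hd : 1 ≤ d)
    (Ω Ωi : Set (EuclideanSpace ℝ (Fin d)))
    (hΩm : MeasurableSet Ω) (hΩb : Bornology.IsBounded Ω)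
    (hΩim : MeasurableSet Ωi) (hsub : Ωi ⊆ Ω)
    (hpos : 0 < volume (Ω \ Ωi))
    (δ : ℝ) (hδ : 0 < δ)
    (slo shi : ℝ) (h0 : 0 < slo) (hss : slo ≤ shi) (h1 : shi < 1) :
    ∃ C : ℝ, 0 < C ∧
      ∀ s : EuclideanSpace ℝ (Fin d) → ℝ, Measurable s →
        (∀ x, slo ≤ s x ∧ s x ≤ shi) →
      ∀ γ : EuclideanSpace ℝ (Fin d) → EuclideanSpace ℝ (Fin d) → ℝ≥0∞,
        Measurable (Function.uncurry γ) →
        (∀ᵐ p : EuclideanSpace ℝ (Fin d) × EuclideanSpace ℝ (Fin d)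
            ∂((volume.restrict Ω).prod (volume.restrict Ω)),
          ENNReal.ofReal (δ * ‖p.1 - p.2‖ ^ (-((d : ℝ) + s p.1 + s p.2))) ≤ γ p.1 p.2) →
      ∀ v : EuclideanSpace ℝ (Fin d) → ℝ,
        MemLp v 2 (volume.restrict Ω) →
        (∀ᵐ x ∂(volume.restrict (Ω \ Ωi)), v x = 0) →
        ENNReal.ofReal (∫ x in Ω, (v x) ^ 2)
          ≤ ENNReal.ofReal C *
            ∫⁻ x in Ω, ∫⁻ y in Ω, ENNReal.ofReal ((v x - v y) ^ 2) * γ x y := by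
  classical
  obtain ⟨R, hR⟩ := Metric.isBounded_iff.mp hΩb
  set R' : ℝ := max R 1 with hR'def
  have hR'1 : (1 : ℝ) ≤ R' := le_max_right _ _
  have hR'0 : (0 : ℝ) < R' := lt_of_lt_of_le one_pos hR'1
  set c0 : ℝ := R' ^ (-((d : ℝ) + 2)) with hc0def
  have hc0 : 0 < c0 := Real.rpow_pos_of_pos hR'0 _
  have hΩfin : volume Ω < ⊤ := hΩb.measure_lt_top
  set m : ℝ≥0∞ := volume (Ω \ Ωi) with hmdef
  have hmfin : m ≠ ⊤ := (lt_of_le_of_lt (measure_mono Set.diff_subset) hΩfin).ne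
  have hm0 : m ≠ 0 := hpos.ne'
  set κ : ℝ≥0∞ := ENNReal.ofReal (δ * c0) with hκdef
  have hκ0 : κ ≠ 0 := (ENNReal.ofReal_pos.mpr (mul_pos hδ hc0)).ne'
  have hκtop : κ ≠ ⊤ := ENNReal.ofReal_ne_top
  have hmκ0 : m * κ ≠ 0 := mul_ne_zero hm0 hκ0
  have hmκtop : m * κ ≠ ⊤ := ENNReal.mul_ne_top hmfin hκtop
  refine ⟨((m * κ)⁻¹).toReal, ENNReal.toReal_pos (ENNReal.inv_ne_zero.mpr hmκtop)
    (ENNReal.inv_ne_top.mpr hmκ0), ?_⟩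
  intro s hs hsb γ hγm hγlb v hv hv0
  have hofC : ENNReal.ofReal (((m * κ)⁻¹).toReal) = (m * κ)⁻¹ :=
    ENNReal.ofReal_toReal (ENNReal.inv_ne_top.mpr hmκ0)
  set π : Measure ((EuclideanSpace ℝ (Fin d)) × (EuclideanSpace ℝ (Fin d))) := (volume.restrict Ω).prod (volume.restrict Ω) with hπdef
  set π2 : Measure ((EuclideanSpace ℝ (Fin d)) × (EuclideanSpace ℝ (Fin d))) := (volume.restrict Ω).prod (volume.restrict (Ω \ Ωi)) with hπ2def
  have hπ2le : π2 ≤ π := by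
    rw [hπdef, hπ2def, Measure.prod_restrict, Measure.prod_restrict]
    exact Measure.restrict_mono (Set.prod_mono Set.Subset.rfl Set.diff_subset) le_rfl
  set F : (EuclideanSpace ℝ (Fin d)) × (EuclideanSpace ℝ (Fin d)) → ℝ≥0∞ := fun p => ENNReal.ofReal ((v p.1 - v p.2) ^ 2) with hFdef
  have hvm : AEMeasurable v (volume.restrict Ω) := hv.aestronglyMeasurable.aemeasurable
  have hv1 : AEMeasurable (fun p : (EuclideanSpace ℝ (Fin d)) × (EuclideanSpace ℝ (Fin d)) => v p.1) π :=
    hvm.comp_quasiMeasurePreserving Measure.quasiMeasurePreserving_fst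
  have hv2 : AEMeasurable (fun p : (EuclideanSpace ℝ (Fin d)) × (EuclideanSpace ℝ (Fin d)) => v p.2) π :=
    hvm.comp_quasiMeasurePreserving Measure.quasiMeasurePreserving_snd
  have hF : AEMeasurable F π := by
    exact (((hv1.sub hv2).pow_const 2).ennreal_ofReal)
  have hF2 : AEMeasurable F π2 := hF.mono_measure hπ2le
  set L : ℝ≥0∞ := ∫⁻ x in Ω, ENNReal.ofReal (v x ^ 2) with hLdef
  -- Step 1: LHS ≤ L
  have hLHS : ENNReal.ofReal (∫ x in Ω, (v x) ^ 2) ≤ L := by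
    rw [ofReal_integral_eq_lintegral_ofReal hv.integrable_sq
      (Filter.Eventually.of_forall fun x => sq_nonneg _)]
  -- Step 2: m * L ≤ ∫ F dπ
  have hstep2 : L * m ≤ ∫⁻ p, F p ∂π := by
    have hmono : ∫⁻ p, F p ∂π2 ≤ ∫⁻ p, F p ∂π := lintegral_mono' hπ2le le_rfl
    have htonelli : ∫⁻ x in Ω, ∫⁻ y in (Ω \ Ωi), F (x, y) ∂volume ∂volume
        = ∫⁻ p, F p ∂π2 := lintegral_lintegral hF2
    have hinner : ∀ x : EuclideanSpace ℝ (Fin d), ∫⁻ y in (Ω \ Ωi), F (x, y) ∂volume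
        = ENNReal.ofReal (v x ^ 2) * m := by
      intro x
      have : ∫⁻ y in (Ω \ Ωi), F (x, y) ∂volume
          = ∫⁻ y in (Ω \ Ωi), ENNReal.ofReal (v x ^ 2) ∂volume := by
        refine lintegral_congr_ae ?_
        filter_upwards [hv0] with y hy
        simp [hFdef, hy]
      rw [this, setLIntegral_const, ← hmdef]
    calc L * m = ∫⁻ x in Ω, ENNReal.ofReal (v x ^ 2) * m ∂volume := by
          rw [hLdef, lintegral_mul_const' m _ hmfin]
      _ = ∫⁻ x in Ω, ∫⁻ y in (Ω \ Ωi), F (x, y) ∂volume ∂volume := by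
          refine lintegral_congr fun x => (hinner x).symm
      _ = ∫⁻ p, F p ∂π2 := htonelli
      _ ≤ ∫⁻ p, F p ∂π := hmono
  -- Step 3: κ * ∫ F dπ ≤ double integral with γ
  have hmem : ∀ᵐ p : (EuclideanSpace ℝ (Fin d)) × (EuclideanSpace ℝ (Fin d)) ∂π, p ∈ Ω ×ˢ Ω := by
    rw [hπdef, Measure.prod_restrict]
    exact ae_restrict_mem (hΩm.prod hΩm)
  have hstep3 : κ * ∫⁻ p, F p ∂π ≤ ∫⁻ p, F p * γ p.1 p.2 ∂π := by
    rw [← lintegral_const_mul' κ _ hκtop]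
    refine lintegral_mono_ae ?_
    filter_upwards [hγlb, hmem] with p hγp hp
    by_cases hxy : p.1 = p.2
    · simp [hFdef, hxy]
    · have ht0 : 0 < ‖p.1 - p.2‖ := norm_pos_iff.mpr (sub_ne_zero.mpr hxy)
      have htR : ‖p.1 - p.2‖ ≤ R' := by
        have := hR hp.1 hp.2
        rw [dist_eq_norm] at this
        exact this.trans (le_max_left _ _)
      have hαle : (d : ℝ) + s p.1 + s p.2 ≤ (d : ℝ) + 2 := by
        have h1' := (hsb p.1).2
        have h2' := (hsb p.2).2
        linarith
      have hα0 : (0 : ℝ) ≤ (d : ℝ) + s p.1 + s p.2 := by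
        have h1' := (hsb p.1).1
        have h2' := (hsb p.2).1
        have : (0 : ℝ) ≤ (d : ℝ) := Nat.cast_nonneg d
        linarith
      have hrpow : c0 ≤ ‖p.1 - p.2‖ ^ (-((d : ℝ) + s p.1 + s p.2)) := by
        calc c0 = R' ^ (-((d : ℝ) + 2)) := hc0def
          _ ≤ R' ^ (-((d : ℝ) + s p.1 + s p.2)) :=
            Real.rpow_le_rpow_of_exponent_le hR'1 (by linarith)
          _ ≤ ‖p.1 - p.2‖ ^ (-((d : ℝ) + s p.1 + s p.2)) :=
            Real.rpow_le_rpow_of_nonpos ht0 htR (by linarith)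
      have hκle : κ ≤ γ p.1 p.2 := by
        refine le_trans ?_ hγp
        rw [hκdef]
        exact ENNReal.ofReal_le_ofReal
          (mul_le_mul_of_nonneg_left hrpow hδ.le)
      calc κ * F p ≤ γ p.1 p.2 * F p := mul_le_mul_left hκle _
        _ = F p * γ p.1 p.2 := mul_comm _ _
  -- Step 4: combine
  have htonelli2 : ∫⁻ x in Ω, ∫⁻ y in Ω, F (x, y) * γ x y ∂volume ∂volume
      = ∫⁻ p, F p * γ p.1 p.2 ∂π := by
    refine lintegral_lintegral ?_
    exact hF.mul hγm.aemeasurable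
  set I : ℝ≥0∞ := ∫⁻ x in Ω, ∫⁻ y in Ω, ENNReal.ofReal ((v x - v y) ^ 2) * γ x y ∂volume ∂volume
    with hIdef
  have hIeq : I = ∫⁻ p, F p * γ p.1 p.2 ∂π := htonelli2
  have hchain : m * κ * L ≤ I := by
    rw [hIeq]
    calc m * κ * L = κ * (L * m) := by ring
      _ ≤ κ * ∫⁻ p, F p ∂π := mul_le_mul_right hstep2 _
      _ ≤ ∫⁻ p, F p * γ p.1 p.2 ∂π := hstep3
  calc ENNReal.ofReal (∫ x in Ω, (v x) ^ 2) ≤ L := hLHS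
    _ = (m * κ)⁻¹ * (m * κ * L) := by
        rw [← mul_assoc, ENNReal.inv_mul_cancel hmκ0 hmκtop, one_mul]
    _ ≤ (m * κ)⁻¹ * I := mul_le_mul_right hchain _
    _ = ENNReal.ofReal (((m * κ)⁻¹).toReal) * I := by rw [hofC]
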